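/- For every real number c, the set {k ∈ ℤ : λ_k = c} contains at most 5 elements (i.e., each eigenvalue iλ_k of the operator ∂_x(-βD^{2m} - αH^{2r} - 2μ) has multiplicity at most 5). -/

import Mathlib

open Real Set

lemma cube_deriv (p : ℝ) (hp : 0 < p) (x : ℝ) :
    HasDerivAt (fun y : ℝ => y * |y| ^ p) ((p + 1) * |x| ^ p) x := by
  rcases lt_trichotomy x 0 with hx | rfl | hx
  · -- x < 0
    have h4 : HasDerivAt (fun y : ℝ => -y) (-1) x := (hasDerivAt_id x).neg
    have h3 := Real.hasDerivAt_rpow_const (x := -x) (p := p + 1) (Or.inl (by linarith))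
    have h2 : HasDerivAt (fun y : ℝ => -((-y) ^ (p + 1))) ((p + 1) * (-x) ^ p) x := by
      have := (h3.comp x h4).neg
      simpa [Function.comp_def, Pi.neg_def, add_sub_cancel_right, mul_comm, mul_assoc] using this
    have heq : (fun y : ℝ => y * |y| ^ p) =ᶠ[nhds x] fun y : ℝ => -((-y) ^ (p + 1)) := by
      filter_upwards [Iio_mem_nhds hx] with y hy
      have hy' : (0:ℝ) < -y := by simpa using hy
      rw [abs_of_neg hy, Real.rpow_add_one (by linarith)]
      ring
    have := h2.congr_of_eventuallyEq heq
    rwa [abs_of_neg hx]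
  · -- x = 0
    have h0 : (p + 1) * |(0:ℝ)| ^ p = 0 := by
      simp [Real.zero_rpow (ne_of_gt hp)]
    rw [h0, hasDerivAt_iff_tendsto_slope]
    have hcont : Filter.Tendsto (fun y : ℝ => |y| ^ p) (nhds 0) (nhds 0) := by
      have : ContinuousAt (fun y : ℝ => |y| ^ p) 0 := by
        exact (Real.continuousAt_rpow_const _ p (Or.inr hp.le)).comp continuous_abs.continuousAt
      simpa [Real.zero_rpow (ne_of_gt hp)] using this.tendsto
    refine (hcont.mono_left nhdsWithin_le_nhds).congr' ?_
    filter_upwards [self_mem_nhdsWithin] with y hy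
    have hy' : y ≠ 0 := hy
    simp [slope_def_field, hy']
  · -- x > 0
    have h3 := Real.hasDerivAt_rpow_const (x := x) (p := p + 1) (Or.inl (ne_of_gt hx))
    have heq : (fun y : ℝ => y * |y| ^ p) =ᶠ[nhds x] fun y : ℝ => y ^ (p + 1) := by
      filter_upwards [Ioi_mem_nhds hx] with y hy
      have hy' : (0:ℝ) < y := hy
      rw [abs_of_pos hy', Real.rpow_add_one (ne_of_gt hy')]
      ring
    have := h3.congr_of_eventuallyEq heq
    rw [abs_of_pos hx]
    simpa [add_sub_cancel_right, mul_comm] using this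

open Real Set

lemma three_zeros (A B m r : ℝ) (hA : 0 < A) (hB : 0 < B) (hr : 0 < r) (hrm : r < m)
    (t1 t2 t3 : ℝ) (h1 : 0 ≤ t1) (h12 : t1 < t2) (h23 : t2 < t3)
    (e12 : A * t1 ^ (2 * r) - B * t1 ^ (2 * m) = A * t2 ^ (2 * r) - B * t2 ^ (2 * m))
    (e23 : A * t2 ^ (2 * r) - B * t2 ^ (2 * m) = A * t3 ^ (2 * r) - B * t3 ^ (2 * m)) :
    False := by
  set w : ℝ → ℝ := fun t => A * t ^ (2 * r) - B * t ^ (2 * m) with hw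
  have hcont : Continuous w := by
    apply Continuous.sub
    · exact continuous_const.mul (continuous_iff_continuousAt.2 fun t =>
        Real.continuousAt_rpow_const _ _ (Or.inr (by linarith)))
    · exact continuous_const.mul (continuous_iff_continuousAt.2 fun t =>
        Real.continuousAt_rpow_const _ _ (Or.inr (by linarith)))
  have hderiv : ∀ s : ℝ, 0 < s →
      deriv w s = A * (2 * r) * s ^ (2 * r - 1) - B * (2 * m) * s ^ (2 * m - 1) := by
    intro s hs
    have d1 := Real.hasDerivAt_rpow_const (x := s) (p := 2 * r) (Or.inl (ne_of_gt hs))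
    have d2 := Real.hasDerivAt_rpow_const (x := s) (p := 2 * m) (Or.inl (ne_of_gt hs))
    have := ((d1.const_mul A).sub (d2.const_mul B)).deriv
    rw [show deriv w s = _ from this]; ring
  -- key: a zero of deriv w at positive s determines s^(2m-2r)
  have hzero : ∀ s : ℝ, 0 < s → deriv w s = 0 →
      B * (2 * m) * s ^ (2 * m - 2 * r) = A * (2 * r) := by
    intro s hs h0
    rw [hderiv s hs] at h0
    have hsplit : s ^ (2 * m - 1) = s ^ (2 * m - 2 * r) * s ^ (2 * r - 1) := by
      rw [← Real.rpow_add hs]; ring_nf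
    rw [hsplit] at h0
    have hpos : (0:ℝ) < s ^ (2 * r - 1) := Real.rpow_pos_of_pos hs _
    have : A * (2 * r) * s ^ (2 * r - 1) = B * (2 * m) * s ^ (2 * m - 2 * r) * s ^ (2 * r - 1) := by
      linarith
    have := mul_right_cancel₀ (ne_of_gt hpos) this
    linarith
  obtain ⟨s1, hs1, hds1⟩ := exists_deriv_eq_zero h12 (hcont.continuousOn) e12
  obtain ⟨s2, hs2, hds2⟩ := exists_deriv_eq_zero h23 (hcont.continuousOn) e23
  have hs1p : 0 < s1 := lt_of_le_of_lt h1 hs1.1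
  have hs2p : 0 < s2 := lt_of_le_of_lt h1 (h12.trans hs2.1)
  have hlt : s1 < s2 := hs1.2.trans hs2.1
  have k1 := hzero s1 hs1p hds1
  have k2 := hzero s2 hs2p hds2
  have hBm : (0:ℝ) < B * (2 * m) := mul_pos hB (by linarith)
  have heq : s1 ^ (2 * m - 2 * r) = s2 ^ (2 * m - 2 * r) :=
    mul_left_cancel₀ (ne_of_gt hBm) (by linarith)
  have : s1 ^ (2 * m - 2 * r) < s2 ^ (2 * m - 2 * r) :=
    Real.rpow_lt_rpow hs1p.le hlt (by linarith)
  linarith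

theorem eigenvalue_multiplicity_le_five
    (α β μ m r : ℝ) (hα : 0 < α) (hβ : 0 < β) (hr : 0 < r) (hrm : r < m)
    (lam : ℤ → ℝ)
    (hlam : ∀ k : ℤ, lam k =
      -β * (k : ℝ) * |(k : ℝ)| ^ (2 * m) + α * (k : ℝ) * |(k : ℝ)| ^ (2 * r) - 2 * μ * (k : ℝ)) :
    ∀ c : ℝ, {k : ℤ | lam k = c}.Finite ∧ {k : ℤ | lam k = c}.ncard ≤ 5 := by
  intro c
  set f : ℝ → ℝ := fun x => -β * x * |x| ^ (2 * m) + α * x * |x| ^ (2 * r) - 2 * μ * x with hf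
  have hderiv : ∀ x : ℝ, HasDerivAt f
      (α * (2 * r + 1) * |x| ^ (2 * r) - β * (2 * m + 1) * |x| ^ (2 * m) - 2 * μ) x := by
    intro x
    have h1 := cube_deriv (2 * m) (by linarith) x
    have h2 := cube_deriv (2 * r) (by linarith) x
    have h3 := ((h1.const_mul (-β)).add (h2.const_mul α)).sub ((hasDerivAt_id x).const_mul (2 * μ))
    have heq : f = fun x : ℝ => -β * (x * |x| ^ (2 * m)) + α * (x * |x| ^ (2 * r)) - 2 * μ * id x := by
      funext y; simp [hf]; ring
    rw [heq]
    exact h3.congr_deriv (by ring)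
  have hcont : Continuous f := by
    exact continuous_iff_continuousAt.2 fun x => (hderiv x).continuousAt
  -- a zero of deriv f gives an equation in |z|
  have hzw : ∀ z : ℝ, deriv f z = 0 →
      α * (2 * r + 1) * |z| ^ (2 * r) - β * (2 * m + 1) * |z| ^ (2 * m) = 2 * μ := by
    intro z hz
    have := (hderiv z).deriv
    rw [hz] at this
    linarith
  -- key: no six integers share the value c
  have key : ∀ t : Finset ℤ, ↑t ⊆ {k : ℤ | lam k = c} → t.card ≤ 5 := by
    intro t ht
    by_contra hcard
    push_neg at hcard
    obtain ⟨u, hut, hu6⟩ := Finset.exists_subset_card_eq (n := 6) hcard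
    have e := u.orderIsoOfFin hu6
    set K : Fin 6 → ℝ := fun i => ((e i : ℤ) : ℝ) with hK
    have hKmono : StrictMono K := by
      intro i j hij
      exact_mod_cast Int.cast_lt.2 (Subtype.coe_lt_coe.2 (e.strictMono hij))
    have hKval : ∀ i, f (K i) = c := by
      intro i
      have hmem : (e i : ℤ) ∈ {k : ℤ | lam k = c} := ht (hut (e i).2)
      have := hmem
      rw [Set.mem_setOf_eq, hlam] at this
      simpa [hK, hf] using this
    -- Rolle five times
    have rolle : ∀ i j : Fin 6, i < j → ∃ z ∈ Set.Ioo (K i) (K j), deriv f z = 0 := by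
      intro i j hij
      exact exists_deriv_eq_zero (hKmono hij) hcont.continuousOn
        ((hKval i).trans (hKval j).symm)
    obtain ⟨z1, hz1, hd1⟩ := rolle 0 1 (by decide)
    obtain ⟨z2, hz2, hd2⟩ := rolle 1 2 (by decide)
    obtain ⟨z3, hz3, hd3⟩ := rolle 2 3 (by decide)
    obtain ⟨z4, hz4, hd4⟩ := rolle 3 4 (by decide)
    obtain ⟨z5, hz5, hd5⟩ := rolle 4 5 (by decide)
    have o12 : z1 < z2 := hz1.2.trans hz2.1
    have o23 : z2 < z3 := hz2.2.trans hz3.1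
    have o34 : z3 < z4 := hz3.2.trans hz4.1
    have o45 : z4 < z5 := hz4.2.trans hz5.1
    have w1 := hzw z1 hd1
    have w2 := hzw z2 hd2
    have w3 := hzw z3 hd3
    have w4 := hzw z4 hd4
    have w5 := hzw z5 hd5
    have hA : (0:ℝ) < α * (2 * r + 1) := by nlinarith
    have hB : (0:ℝ) < β * (2 * m + 1) := by nlinarith
    rcases le_or_gt 0 z3 with hsgn | hsgn
    · -- use z3 < z4 < z5, all with |z| = z
      refine three_zeros (α * (2 * r + 1)) (β * (2 * m + 1)) m r hA hB hr hrm
        z3 z4 z5 hsgn o34 o45 ?_ ?_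
      · rw [← abs_of_nonneg hsgn, ← abs_of_nonneg (by linarith : (0:ℝ) ≤ z4)]
        linarith
      · rw [← abs_of_nonneg (by linarith : (0:ℝ) ≤ z4),
          ← abs_of_nonneg (by linarith : (0:ℝ) ≤ z5)]
        linarith
    · -- use -z3 < -z2 < -z1
      refine three_zeros (α * (2 * r + 1)) (β * (2 * m + 1)) m r hA hB hr hrm
        (-z3) (-z2) (-z1) (by linarith) (by linarith) (by linarith) ?_ ?_
      · rw [← abs_of_neg hsgn, ← abs_of_neg (by linarith : z2 < 0)]
        linarith
      · rw [← abs_of_neg (by linarith : z2 < 0), ← abs_of_neg (by linarith : z1 < 0)]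
        linarith
  have hfin : {k : ℤ | lam k = c}.Finite := by
    by_contra hinf
    have hinf' : {k : ℤ | lam k = c}.Infinite := hinf
    obtain ⟨t, hts, htc⟩ := hinf'.exists_subset_card_eq 6
    have := key t hts
    omega
  refine ⟨hfin, ?_⟩
  rw [Set.ncard_eq_toFinset_card _ hfin]
  exact key hfin.toFinset (by simp)
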